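/- Let p ≥ 5 be a prime, σ ∈ {−1, +1}, r a positive integer, and q a prime number. Suppose the trinomial P(X) = X^p + σprqX − q ∈ ℤ[X] is irreducible and monogenic, i.e., the ring of integers O_L of L = ℚ(θ) equals ℤ[θ] for a root θ of P. Then the ideal 𝔔 = q·O_L + θ·O_L is the principal ideal θ·O_L generated by θ, it is prime, and q·O_L = 𝔔^p; that is, q is totally ramified in L and θ generates an absolute ambiguous principal ideal of L/ℚ. -/

import Mathlib

open NumberField Polynomial

/-- Let `p ≥ 5` be prime, `σ = ±1`, `r ≥ 1`, and `q` a prime number, such that the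
trinomial `P(X) = X^p + σprqX − q ∈ ℤ[X]` is irreducible over `ℚ` and monogenic for a
root `θ` generating `L = ℚ(θ)`. Then the ideal `𝔔 = q·𝓞 L + θ·𝓞 L` is the principal
ideal `θ·𝓞 L`, it is prime, and `q·𝓞 L = 𝔔^p`: `q` is totally ramified in `L` and `θ`
generates an absolute ambiguous principal ideal of `L/ℚ`. -/
theorem degree_p_trinomial_absolute_principal_factor
    (p : ℕ) (hp : p.Prime) (hp5 : 5 ≤ p) (σ : ℤ) (hσ : σ = 1 ∨ σ = -1)
    (r : ℕ) (hr : 0 < r) (q : ℕ) (hq : q.Prime)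
    (L : Type*) [Field L] [NumberField L] (θ : 𝓞 L)
    (hroot : (θ : L) ^ p + ((σ * (p : ℤ) * (r : ℤ) * (q : ℤ) : ℤ) : L) * (θ : L)
      - (q : L) = 0)
    (hirr : Irreducible
      ((X ^ p + C (σ * (p : ℤ) * (r : ℤ) * (q : ℤ)) * X - C (q : ℤ) : Polynomial ℤ).map
        (Int.castRingHom ℚ)))
    (hgen : IntermediateField.adjoin ℚ {((θ : L))} = ⊤)
    (hmono : Algebra.adjoin ℤ {((θ : L))} = integralClosure ℤ L) :
    (Ideal.span {(q : 𝓞 L), θ} : Ideal (𝓞 L)) = Ideal.span {θ} ∧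
    (Ideal.span {(q : 𝓞 L), θ} : Ideal (𝓞 L)).IsPrime ∧
    (Ideal.span {(q : 𝓞 L)} : Ideal (𝓞 L)) = (Ideal.span {(q : 𝓞 L), θ}) ^ p := by
  have hp0 : 0 < p := hp.pos
  have coeInt : ∀ n : ℤ, ((n : 𝓞 L) : L) = (n : L) :=
    fun n => map_intCast (algebraMap (𝓞 L) L) n
  have coeNat : ∀ n : ℕ, ((n : 𝓞 L) : L) = (n : L) :=
    fun n => map_natCast (algebraMap (𝓞 L) L) n
  -- the key equation in 𝓞 L, with A := σ p r
  set A : 𝓞 L := (σ : 𝓞 L) * (p : 𝓞 L) * (r : 𝓞 L) with hA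
  have hOL : θ ^ p + A * (q : 𝓞 L) * θ = (q : 𝓞 L) := by
    refine NumberField.RingOfIntegers.ext ?_
    have h := hroot
    push_cast at h
    push_cast
    rw [hA]
    push_cast [coeInt, coeNat]
    linear_combination h
  -- q = θ * (θ^(p-1) + A*q)
  have hsplit : θ * θ ^ (p - 1) = θ ^ p := by
    rw [← pow_succ', Nat.sub_add_cancel hp0]
  have hqf : (q : 𝓞 L) = θ * (θ ^ (p - 1) + A * (q : 𝓞 L)) := by
    linear_combination - hOL - hsplit
  have hdvd : θ ∣ (q : 𝓞 L) := ⟨_, hqf⟩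
  -- θ^p = q * (1 - A θ), and 1 - A θ is a unit
  have hθp : θ ^ p = (q : 𝓞 L) * (1 - A * θ) := by
    linear_combination hOL
  have hxp : (A * θ) ^ p = (q : 𝓞 L) * A ^ p * (1 - A * θ) := by
    rw [mul_pow, hθp]; ring
  have hunit : IsUnit (1 - A * θ) := by
    apply IsUnit.of_mul_eq_one (a := 1 - A * θ)
      ((∑ i ∈ Finset.range p, (A * θ) ^ i) + (q : 𝓞 L) * A ^ p)
    have hg := geom_sum_mul (A * θ) p
    linear_combination (-1 : 𝓞 L) * hg - hxp
  -- span {q} = span {θ} ^ p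
  have hspan_q : (Ideal.span {(q : 𝓞 L)} : Ideal (𝓞 L)) = Ideal.span {θ} ^ p := by
    rw [Ideal.span_singleton_pow, Ideal.span_singleton_eq_span_singleton]
    exact ⟨hunit.unit, by rw [IsUnit.unit_spec, ← hθp]⟩
  -- span {q, θ} = span {θ}
  have h1 : (Ideal.span {(q : 𝓞 L), θ} : Ideal (𝓞 L)) = Ideal.span {θ} := by
    rw [Ideal.span_insert]
    exact sup_eq_right.mpr (Ideal.span_singleton_le_span_singleton.mpr hdvd)
  -- the minimal polynomial and finrank
  have hint : IsIntegral ℚ ((θ : L)) := IsIntegral.of_finite ℚ _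
  have hmonicZ : (X ^ p + C (σ * (p : ℤ) * (r : ℤ) * (q : ℤ)) * X - C (q : ℤ)
      : Polynomial ℤ).Monic := by
    have h1p : 1 < p := by omega
    monicity! <;> simp [show ¬ p ≤ 1 by omega, show 1 ≤ p by omega]
  have hmonicQ : ((X ^ p + C (σ * (p : ℤ) * (r : ℤ) * (q : ℤ)) * X - C (q : ℤ)
      : Polynomial ℤ).map (Int.castRingHom ℚ)).Monic := hmonicZ.map _
  have hroot' : aeval ((θ : L)) ((X ^ p + C (σ * (p : ℤ) * (r : ℤ) * (q : ℤ)) * X - C (q : ℤ)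
      : Polynomial ℤ).map (Int.castRingHom ℚ)) = 0 := by
    rw [show (Int.castRingHom ℚ) = algebraMap ℤ ℚ from rfl, aeval_map_algebraMap]
    simp only [map_sub, map_add, map_mul, aeval_X_pow, aeval_X, aeval_C]
    have h := hroot
    push_cast at h
    simp only [eq_intCast]
    push_cast
    linear_combination h
  have hmin : minpoly ℚ ((θ : L)) = (X ^ p + C (σ * (p : ℤ) * (r : ℤ) * (q : ℤ)) * X - C (q : ℤ)
      : Polynomial ℤ).map (Int.castRingHom ℚ) :=
    (minpoly.eq_of_irreducible_of_monic hirr hroot' hmonicQ).symm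
  have hdeg : ((X ^ p + C (σ * (p : ℤ) * (r : ℤ) * (q : ℤ)) * X - C (q : ℤ)
      : Polynomial ℤ).map (Int.castRingHom ℚ)).natDegree = p := by
    rw [hmonicZ.natDegree_map]
    have h1p : 1 < p := by omega
    compute_degree! <;> simp [show p ≠ 1 by omega, show p ≠ 0 by omega]
  have hfinrank : Module.finrank ℚ L = p := by
    have h := IntermediateField.adjoin.finrank hint
    rw [hgen, hmin, hdeg] at h
    rw [← IntermediateField.finrank_top' (F := ℚ) (E := L)]
    exact h
  -- absNorm of span θ is q
  have habs : Ideal.absNorm (Ideal.span {θ} : Ideal (𝓞 L)) = q := by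
    have hq' : Ideal.absNorm (Ideal.span {(q : 𝓞 L)} : Ideal (𝓞 L)) = q ^ p := by
      rw [show ((q : ℕ) : 𝓞 L) = algebraMap ℤ (𝓞 L) (q : ℤ) from by push_cast; simp,
        Ideal.absNorm_span_singleton,
        Algebra.norm_algebraMap_of_basis (Module.Free.chooseBasis ℤ (𝓞 L)),
        ← Module.finrank_eq_card_chooseBasisIndex, RingOfIntegers.rank, hfinrank]
      rw [Int.natAbs_pow]
      simp
    have h2 := congrArg Ideal.absNorm hspan_q
    rw [hq', map_pow] at h2
    exact pow_left_inj₀ (Nat.zero_le _) (Nat.zero_le _) (by omega) |>.mp h2.symm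
  refine ⟨h1, ?_, ?_⟩
  · rw [h1]
    exact Ideal.isPrime_of_irreducible_absNorm (habs ▸ hq.prime.irreducible)
  · rw [h1]
    exact hspan_q
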